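/- Let A(t) be an n×n matrix over ℚ[t,t⁻¹] whose first row equals (t-1)·(a₁₁, …, a₁ₙ) and whose first column below the (1,1)-entry equals (t-1)·(a₂₁, …, aₙ₁)ᵀ, with integer aᵢⱼ, and whose lower-right (n-1)×(n-1) block X(t) satisfies X(1) = I. Then det A(t) is divisible by (t-1) in ℚ[t,t⁻¹], and (det A(t)/(t-1)) evaluated at t = 1 equals a₁₁. -/

import Mathlib

open LaurentPolynomial

/-- Evaluation of a Laurent polynomial over ℚ at `t = 1`. -/
noncomputable def evalOneQ : LaurentPolynomial ℚ →+* ℚ :=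
  AddMonoidAlgebra.liftNCRingHom (RingHom.id ℚ) 1 (fun _ _ => Commute.all _ _)

lemma evalOneQ_single (m : ℤ) (r : ℚ) : evalOneQ (AddMonoidAlgebra.single m r) = r := by
  show AddMonoidAlgebra.liftNC _ _ (AddMonoidAlgebra.single m r) = r
  rw [AddMonoidAlgebra.liftNC_single]
  simp

lemma evalOneQ_T : evalOneQ (T 1) = 1 := by rw [T]; exact evalOneQ_single 1 1
lemma evalOneQ_C (c : ℚ) : evalOneQ (C c) = c := by rw [C]; exact evalOneQ_single 0 c

/-- If the first row of `A(t)` is `(t-1)·(a₀₀,…,a₀ₙ)`, the first column below the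
corner is `(t-1)·(a₁₀,…,aₙ₀)`, with integer `aᵢⱼ`, and the lower-right block
evaluates at `t = 1` to the identity, then `det A` is divisible by `t - 1` and
`(det A / (t-1))` evaluated at `t = 1` equals `a₀₀`. -/
theorem det_div_t_sub_one_eval {n : ℕ}
    (A : Matrix (Fin (n + 1)) (Fin (n + 1)) (LaurentPolynomial ℚ))
    (a : Fin (n + 1) → Fin (n + 1) → ℤ)
    (hrow : ∀ j, A 0 j = (T 1 - 1) * C ((a 0 j : ℚ)))
    (hcol : ∀ i : Fin n, A i.succ 0 = (T 1 - 1) * C ((a i.succ 0 : ℚ)))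
    (hX : (A.submatrix Fin.succ Fin.succ).map evalOneQ = 1) :
    ∃ D : LaurentPolynomial ℚ, A.det = (T 1 - 1) * D ∧ evalOneQ D = (a 0 0 : ℚ) := by
  refine ⟨∑ j : Fin (n+1), (-1) ^ (j : ℕ) * C ((a 0 j : ℚ)) *
      (A.submatrix Fin.succ j.succAbove).det, ?_, ?_⟩
  · rw [Matrix.det_succ_row_zero, Finset.mul_sum]
    refine Finset.sum_congr rfl fun j _ => ?_
    rw [hrow j]; ring
  · rw [map_sum]
    rw [Finset.sum_eq_single 0]
    · rw [map_mul, map_mul, RingHom.map_det, evalOneQ_C]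
      have h0 : (0 : Fin (n+1)).succAbove = Fin.succ := Fin.succAbove_zero
      rw [RingHom.mapMatrix_apply, h0, hX]
      simp
    · intro j _ hj
      rw [map_mul, map_mul, RingHom.map_det, RingHom.mapMatrix_apply]
      have hz : ((A.submatrix Fin.succ j.succAbove).map evalOneQ).det = 0 := by
        have hj0 : (0 : Fin (n+1)) < j := Fin.pos_of_ne_zero hj
        obtain ⟨k, rfl⟩ := Fin.eq_succ_of_ne_zero hj
        haveI : NeZero n := ⟨k.pos.ne'⟩
        apply Matrix.det_eq_zero_of_column_eq_zero 0
        intro i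
        have h00 : (k.succ).succAbove 0 = 0 :=
          Fin.succAbove_of_castSucc_lt _ _ (by simp)
        simp only [Matrix.map_apply, Matrix.submatrix_apply, h00]
        rw [hcol i, map_mul, map_sub, evalOneQ_T, map_one]
        ring
      rw [hz, mul_zero]
    · intro h; exact absurd (Finset.mem_univ 0) h
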